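/- If T is a tree on n vertices (n ≥ 2) and T is not isomorphic to the star S_n, then M_1(T) < M_1(S_n) = (n-1)^2 + (n-1). -/

import Mathlib

open scoped Classical
noncomputable def M1 {V : Type*} [Fintype V] (G : SimpleGraph V) : ℕ :=
  ∑ v, G.degree v ^ 2
noncomputable def M2 {V : Type*} [Fintype V] (G : SimpleGraph V) : ℕ :=
  ∑ e ∈ G.edgeFinset,
    Sym2.lift ⟨fun u v => G.degree u * G.degree v, fun _ _ => Nat.mul_comm _ _⟩ e
noncomputable def numEdges {V : Type*} [Fintype V] (G : SimpleGraph V) : ℕ :=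
  G.edgeFinset.card
def IsKCyclic {V : Type*} [Fintype V] (k : ℕ) (G : SimpleGraph V) : Prop :=
  G.Connected ∧ G.edgeFinset.card + 1 = Fintype.card V + k
def starGraph (n : ℕ) : SimpleGraph (Fin n) :=
  { Adj := fun u v => u ≠ v ∧ (u.val = 0 ∨ v.val = 0)
    symm := by constructor; intro u v h; exact ⟨h.1.symm, h.2.symm⟩
    loopless := by constructor; intro u h; exact h.1 rfl }
def joinG {α β : Type*} (G : SimpleGraph α) (H : SimpleGraph β) : SimpleGraph (α ⊕ β) :=
  { Adj := fun u v =>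
      match u, v with
      | Sum.inl a, Sum.inl b => G.Adj a b
      | Sum.inr a, Sum.inr b => H.Adj a b
      | Sum.inl _, Sum.inr _ => True
      | Sum.inr _, Sum.inl _ => True
    symm := by
      constructor; intro u v h
      cases u <;> cases v <;> simp_all [SimpleGraph.adj_comm]
    loopless := by
      constructor; intro u h
      cases u <;> simp_all }
noncomputable def deleteS {V : Type*} [Fintype V] (G : SimpleGraph V) (S : Finset V) :
    SimpleGraph ↥((↑S : Set V)ᶜ) :=
  G.induce ((↑S : Set V)ᶜ)
def QuasiKCyclic {V : Type*} [Fintype V] (k p : ℕ) (G : SimpleGraph V) : Prop :=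
  G.Connected ∧
  (∃ S : Finset V, S.card = p ∧ IsKCyclic k (deleteS G S)) ∧
  ∀ S' : Finset V, IsKCyclic k (deleteS G S') → p ≤ S'.card
def Un3 (n : ℕ) : SimpleGraph (Fin n) :=
  { Adj := fun u v => u ≠ v ∧ (u.val = 0 ∨ v.val = 0 ∨ (u.val ≤ 2 ∧ v.val ≤ 2))
    symm := by constructor; intro u v h; tauto
    loopless := by constructor; intro u h; exact h.1 rfl }
def Bn33 (n : ℕ) : SimpleGraph (Fin n) :=
  { Adj := fun u v => u ≠ v ∧ (u.val = 0 ∨ v.val = 0 ∨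
      (1 ≤ u.val ∧ u.val ≤ 2 ∧ 1 ≤ v.val ∧ v.val ≤ 2) ∨
      (3 ≤ u.val ∧ u.val ≤ 4 ∧ 3 ≤ v.val ∧ v.val ≤ 4))
    symm := by constructor; intro u v h; tauto
    loopless := by constructor; intro u h; exact h.1 rfl }

lemma star_M1 {n : ℕ} (hn : 2 ≤ n) : M1 (starGraph n) = (n - 1) ^ 2 + (n - 1) := by
  have hpos : 0 < n := by omega
  set z : Fin n := ⟨0, hpos⟩ with hz
  have hdz : (starGraph n).degree z = n - 1 := by
    rw [← SimpleGraph.card_neighborFinset_eq_degree]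
    have : (starGraph n).neighborFinset z = Finset.univ.erase z := by
      ext w
      simp only [SimpleGraph.mem_neighborFinset, Finset.mem_erase, Finset.mem_univ, and_true]
      constructor
      · rintro ⟨h1, _⟩; exact fun h => h1 h.symm
      · intro h; exact ⟨fun h' => h h'.symm, Or.inl rfl⟩
    rw [this, Finset.card_erase_of_mem (Finset.mem_univ z), Finset.card_univ, Fintype.card_fin]
  have hdv : ∀ v : Fin n, v ≠ z → (starGraph n).degree v = 1 := by
    intro v hv
    rw [← SimpleGraph.card_neighborFinset_eq_degree]
    have : (starGraph n).neighborFinset v = {z} := by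
      ext w
      simp only [SimpleGraph.mem_neighborFinset, Finset.mem_singleton]
      constructor
      · rintro ⟨h1, h2 | h2⟩
        · exact absurd (Fin.ext h2) hv
        · exact Fin.ext h2
      · rintro rfl
        exact ⟨hv, Or.inr rfl⟩
    rw [this, Finset.card_singleton]
  have : M1 (starGraph n) = ∑ v ∈ Finset.univ.erase z, (starGraph n).degree v ^ 2
      + (starGraph n).degree z ^ 2 := by
    rw [M1, ← Finset.sum_erase_add _ _ (Finset.mem_univ z)]
  rw [this, hdz]
  have : ∑ v ∈ Finset.univ.erase z, (starGraph n).degree v ^ 2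
      = ∑ _v ∈ Finset.univ.erase z, 1 := by
    apply Finset.sum_congr rfl
    intro v hv
    rw [hdv v (Finset.mem_erase.mp hv).1, one_pow]
  rw [this, Finset.sum_const, smul_eq_mul, mul_one,
    Finset.card_erase_of_mem (Finset.mem_univ z), Finset.card_univ, Fintype.card_fin]
  omega

theorem stmt1 {V : Type*} [Fintype V] {n : ℕ} (hn : 2 ≤ n) (hcard : Fintype.card V = n)
    (T : SimpleGraph V) (hT : T.IsTree) (hiso : ¬ Nonempty (T ≃g starGraph n)) :
    M1 T < M1 (starGraph n) ∧ M1 (starGraph n) = (n - 1) ^ 2 + (n - 1) := by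
  refine ⟨?_, star_M1 hn⟩
  classical
  have hpos : 0 < n := by omega
  have hV1 : 1 < Fintype.card V := by omega
  have hdeg1 : ∀ v : V, 1 ≤ T.degree v := by
    intro v
    rw [Nat.one_le_iff_ne_zero, ← Nat.pos_iff_ne_zero, SimpleGraph.degree_pos_iff_exists_adj]
    obtain ⟨u, hu⟩ := Fintype.exists_ne_of_one_lt_card hV1 v
    obtain ⟨p⟩ := (hT.isConnected.preconnected v u)
    exact ⟨p.getVert 1, p.adj_snd (p.not_nil_of_ne (Ne.symm hu))⟩
  have hedges : T.edgeFinset.card = n - 1 := by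
    have := hT.card_edgeFinset
    omega
  -- no vertex of degree n - 1, else build iso to star
  have hdegmax : ∀ v : V, T.degree v ≤ n - 2 := by
    intro v
    by_contra hcon
    push_neg at hcon
    have hlt : T.degree v < Fintype.card V := T.degree_lt_card_verts v
    have hdv : T.degree v = n - 1 := by omega
    -- all edges incident to v
    have hinc : T.incidenceFinset v = T.edgeFinset := by
      apply Finset.eq_of_subset_of_card_le
      · intro e he
        rw [SimpleGraph.mem_incidenceFinset] at he
        exact SimpleGraph.mem_edgeFinset.mpr he.1
      · rw [T.card_incidenceFinset_eq_degree, hdv, hedges]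
    have hchar : ∀ u w : V, T.Adj u w ↔ (u ≠ w ∧ (u = v ∨ w = v)) := by
      have hadjall : ∀ w : V, w ≠ v → T.Adj v w := by
        have hnb : T.neighborFinset v = Finset.univ.erase v := by
          apply Finset.eq_of_subset_of_card_le
          · intro w hw
            rw [SimpleGraph.mem_neighborFinset] at hw
            exact Finset.mem_erase.mpr ⟨hw.ne', Finset.mem_univ _⟩
          · rw [Finset.card_erase_of_mem (Finset.mem_univ v), Finset.card_univ,
              SimpleGraph.card_neighborFinset_eq_degree, hdv, hcard]
        intro w hw
        rw [← SimpleGraph.mem_neighborFinset, hnb]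
        exact Finset.mem_erase.mpr ⟨hw, Finset.mem_univ _⟩
      intro u w
      constructor
      · intro h
        refine ⟨h.ne, ?_⟩
        have : s(u, w) ∈ T.incidenceFinset v := by
          rw [hinc, SimpleGraph.mem_edgeFinset]
          exact h
        rw [SimpleGraph.mem_incidenceFinset] at this
        have := this.2
        rw [Sym2.mem_iff] at this
        tauto
      · rintro ⟨hne, rfl | rfl⟩
        · exact hadjall w (Ne.symm hne)
        · exact (hadjall u hne).symm
    -- build iso
    apply hiso
    obtain ⟨e⟩ : Nonempty (V ≃ Fin n) := by
      rw [← Fintype.card_eq, hcard, Fintype.card_fin]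
    set z : Fin n := ⟨0, hpos⟩ with hzdef
    let f : V ≃ Fin n := e.trans (Equiv.swap (e v) z)
    have hfv : f v = z := by simp [f, Equiv.swap_apply_left]
    have hfz : ∀ u : V, f u = z ↔ u = v := by
      intro u
      constructor
      · intro h; have := h.trans hfv.symm; exact f.injective this
      · rintro rfl; exact hfv
    refine ⟨⟨f, ?_⟩⟩
    intro u w
    show (f u ≠ f w ∧ ((f u).val = 0 ∨ (f w).val = 0)) ↔ T.Adj u w
    rw [hchar u w]
    have hval : ∀ x : Fin n, x.val = 0 ↔ x = z := by
      intro x; constructor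
      · intro h; exact Fin.ext h
      · rintro rfl; rfl
    rw [hval, hval, hfz, hfz]
    constructor
    · rintro ⟨h1, h2⟩; exact ⟨fun h => h1 (congrArg f h), h2⟩
    · rintro ⟨h1, h2⟩; exact ⟨fun h => h1 (f.injective h), h2⟩
  -- now the counting argument
  obtain ⟨v0⟩ : Nonempty V := Fintype.card_pos_iff.mp (by omega)
  have hn3 : 3 ≤ n := by
    have h1 := hdeg1 v0
    have h2 := hdegmax v0
    omega
  obtain ⟨m, rfl⟩ : ∃ m, n = m + 3 := ⟨n - 3, by omega⟩
  have hsum : ∑ v, T.degree v = 2 * (m + 2) := by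
    rw [SimpleGraph.sum_degrees_eq_twice_card_edges, hedges]
    omega
  have hcardV : Fintype.card V = m + 3 := hcard
  have hkey : ∀ v : V, T.degree v ^ 2 + 1 = (T.degree v - 1) ^ 2 + 2 * T.degree v := by
    intro v
    obtain ⟨c, hc⟩ := Nat.exists_eq_add_of_le (hdeg1 v)
    rw [hc]
    have : 1 + c - 1 = c := by omega
    rw [this]
    ring
  have hsum2 : ∑ v, T.degree v ^ 2 + (m + 3)
      = ∑ v, (T.degree v - 1) ^ 2 + 2 * (2 * (m + 2)) := by
    rw [← hsum, Finset.mul_sum, ← Finset.sum_add_distrib]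
    have : (m + 3) = ∑ _v : V, 1 := by
      rw [Finset.sum_const, smul_eq_mul, mul_one, Finset.card_univ, hcardV]
    rw [this, ← Finset.sum_add_distrib]
    exact Finset.sum_congr rfl fun v _ => hkey v
  have hsub : ∑ v, (T.degree v - 1) + (m + 3) = 2 * (m + 2) := by
    rw [← hsum]
    have : (m + 3) = ∑ _v : V, 1 := by
      rw [Finset.sum_const, smul_eq_mul, mul_one, Finset.card_univ, hcardV]
    rw [this, ← Finset.sum_add_distrib]
    exact Finset.sum_congr rfl fun v _ => by have := hdeg1 v; omega
  have hbound : ∑ v, (T.degree v - 1) ^ 2 ≤ m * ∑ v, (T.degree v - 1) := by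
    rw [Finset.mul_sum]
    apply Finset.sum_le_sum
    intro v _
    have h2 := hdegmax v
    have : T.degree v - 1 ≤ m := by omega
    calc (T.degree v - 1) ^ 2 = (T.degree v - 1) * (T.degree v - 1) := sq (T.degree v - 1) ▸ by ring
      _ ≤ m * (T.degree v - 1) := Nat.mul_le_mul_right _ this
  rw [star_M1 (by omega)]
  show ∑ v, T.degree v ^ 2 < (m + 3 - 1) ^ 2 + (m + 3 - 1)
  have hss : ∑ v, (T.degree v - 1) = m + 1 := by omega
  rw [hss] at hbound
  have e1 : (m + 3 - 1) ^ 2 + (m + 3 - 1) = m * m + 5 * m + 6 := by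
    have : m + 3 - 1 = m + 2 := by omega
    rw [this]; ring
  have e2 : m * (m + 1) = m * m + m := by ring
  omega
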